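/- Given a grid ((ξ,X),(η,Y)) on a double vector bundle (D; A, B; M), the warp warp(ξ,η), defined pointwise by ξ(Y(m)) -_A η(X(m)) = warp(ξ,η)(m) +_B 0̃_{X(m)}, is a smooth section of the core bundle C → M, and it changes sign when ξ and η are interchanged: warp(η,ξ) = -warp(ξ,η). -/

import Mathlib

/-! Algebraic model of (double) vector bundles.

A `PreVB E B` is a vector bundle structure on `E` over the base `B`, recorded
through its structure maps (projection, fibrewise addition, scalar
multiplication by reals, zero section and fibrewise negation) together with
the usual axioms, all stated for elements lying in a common fibre. -/

structure PreVB (E : Type*) (B : Type*) where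
  π : E → B
  add : E → E → E
  smul : ℝ → E → E
  neg : E → E
  zero : B → E
  π_zero : ∀ b, π (zero b) = b
  π_add : ∀ e e', π e = π e' → π (add e e') = π e
  π_smul : ∀ t e, π (smul t e) = π e
  π_neg : ∀ e, π (neg e) = π e
  add_zero : ∀ e, add e (zero (π e)) = e
  zero_add : ∀ e, add (zero (π e)) e = e
  add_comm : ∀ e e', π e = π e' → add e e' = add e' e
  add_assoc : ∀ e₁ e₂ e₃, π e₁ = π e₂ → π e₂ = π e₃ →
    add (add e₁ e₂) e₃ = add e₁ (add e₂ e₃)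
  add_neg : ∀ e, add e (neg e) = zero (π e)
  one_smul : ∀ e, smul 1 e = e
  smul_zero : ∀ t b, smul t (zero b) = zero b
  smul_add : ∀ t e e', π e = π e' → smul t (add e e') = add (smul t e) (smul t e')
  add_smul : ∀ t s e, smul (t + s) e = add (smul t e) (smul s e)
  mul_smul : ∀ t s e, smul (t * s) e = smul t (smul s e)

/-- Fibrewise subtraction. -/
def PreVB.sub {E B : Type*} (V : PreVB E B) (e e' : E) : E := V.add e (V.neg e')

/-- An (algebraic model of a) double vector bundle `(D; A, B; M)`:
two vector bundle structures on `D`, over the vector bundles `A → M` and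
`B → M`, which commute in the categorical sense: each structure map of either
structure on `D` is a morphism of vector bundles with respect to the other
structure.  The field `core_exists` records that the core acts freely and
transitively on the fibres of `D → A ×_M B` (it follows, for genuine double
vector bundles, from `D → A ×_M B` being a surjective submersion). -/
structure DVB (D : Type*) (A : Type*) (B : Type*) (M : Type*) where
  bA : PreVB A M
  bB : PreVB B M
  vA : PreVB D A
  vB : PreVB D B
  proj_compat : ∀ d, bA.π (vA.π d) = bB.π (vB.π d)
  πB_addA : ∀ d d', vA.π d = vA.π d' → vB.π (vA.add d d') = bB.add (vB.π d) (vB.π d')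
  πA_addB : ∀ d d', vB.π d = vB.π d' → vA.π (vB.add d d') = bA.add (vA.π d) (vA.π d')
  πB_smulA : ∀ t d, vB.π (vA.smul t d) = bB.smul t (vB.π d)
  πA_smulB : ∀ t d, vA.π (vB.smul t d) = bA.smul t (vA.π d)
  πB_negA : ∀ d, vB.π (vA.neg d) = bB.neg (vB.π d)
  πA_negB : ∀ d, vA.π (vB.neg d) = bA.neg (vA.π d)
  πB_zeroA : ∀ a, vB.π (vA.zero a) = bB.zero (bA.π a)
  πA_zeroB : ∀ b, vA.π (vB.zero b) = bA.zero (bB.π b)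
  zeroA_add : ∀ a a', bA.π a = bA.π a' →
    vA.zero (bA.add a a') = vB.add (vA.zero a) (vA.zero a')
  zeroB_add : ∀ b b', bB.π b = bB.π b' →
    vB.zero (bB.add b b') = vA.add (vB.zero b) (vB.zero b')
  zeroA_smul : ∀ t a, vA.zero (bA.smul t a) = vB.smul t (vA.zero a)
  zeroB_smul : ∀ t b, vB.zero (bB.smul t b) = vA.smul t (vB.zero b)
  double_zero : ∀ m, vA.zero (bA.zero m) = vB.zero (bB.zero m)
  interchange : ∀ d₁ d₂ d₃ d₄,
    vA.π d₁ = vA.π d₂ → vA.π d₃ = vA.π d₄ →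
    vB.π d₁ = vB.π d₃ → vB.π d₂ = vB.π d₄ →
    vB.add (vA.add d₁ d₂) (vA.add d₃ d₄) = vA.add (vB.add d₁ d₃) (vB.add d₂ d₄)
  smulA_addB : ∀ t d d', vB.π d = vB.π d' →
    vA.smul t (vB.add d d') = vB.add (vA.smul t d) (vA.smul t d')
  smulB_addA : ∀ t d d', vA.π d = vA.π d' →
    vB.smul t (vA.add d d') = vA.add (vB.smul t d) (vB.smul t d')
  smul_smul : ∀ t s d, vA.smul t (vB.smul s d) = vB.smul s (vA.smul t d)
  core_exists : ∀ d d', vA.π d = vA.π d' → vB.π d = vB.π d' →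
    ∃! c : D, (vA.π c = bA.zero (bA.π (vA.π d)) ∧ vB.π c = bB.zero (bA.π (vA.π d))) ∧
      d = vA.add d' (vB.add c (vA.zero (vA.π d)))

/-- `d` is an element of the core of the double vector bundle, sitting over `m ∈ M`. -/
def DVB.CoreAt {D A B M : Type*} (V : DVB D A B M) (m : M) (d : D) : Prop :=
  V.vA.π d = V.bA.zero m ∧ V.vB.π d = V.bB.zero m

/-- A linear section `(ξ, X)` of the double vector bundle: `ξ : B → D` is a
section of `D → B` which is a morphism of vector bundles over `X : M → A`. -/
structure LinSecB {D A B M : Type*} (V : DVB D A B M) where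
  ξ : B → D
  X : M → A
  secX : ∀ m, V.bA.π (X m) = m
  proj : ∀ b, V.vB.π (ξ b) = b
  over_base : ∀ b, V.vA.π (ξ b) = X (V.bB.π b)
  map_add : ∀ b b', V.bB.π b = V.bB.π b' →
    ξ (V.bB.add b b') = V.vA.add (ξ b) (ξ b')
  map_smul : ∀ t b, ξ (V.bB.smul t b) = V.vA.smul t (ξ b)

/-- A linear section `(η, Y)` of the other structure: `η : A → D` is a section
of `D → A` which is a morphism of vector bundles over `Y : M → B`. -/
structure LinSecA {D A B M : Type*} (V : DVB D A B M) where
  η : A → D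
  Y : M → B
  secY : ∀ m, V.bB.π (Y m) = m
  proj : ∀ a, V.vA.π (η a) = a
  over_base : ∀ a, V.vB.π (η a) = Y (V.bA.π a)
  map_add : ∀ a a', V.bA.π a = V.bA.π a' →
    η (V.bA.add a a') = V.vB.add (η a) (η a')
  map_smul : ∀ t a, η (V.bA.smul t a) = V.vB.smul t (η a)

/-- `w : M → D` is (the core-valued function underlying) the warp of the grid
`((ξ, X), (η, Y))`:  pointwise it is a core element and satisfies
`ξ(Y(m)) -_A η(X(m)) = w(m) +_B 0̃_{X(m)}` and
`ξ(Y(m)) -_B η(X(m)) = w(m) +_A 0̃_{Y(m)}`. -/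
def DVB.IsWarp {D A B M : Type*} (V : DVB D A B M)
    (s : LinSecB V) (r : LinSecA V) (w : M → D) : Prop :=
  ∀ m : M, V.CoreAt m (w m) ∧
    V.vA.sub (s.ξ (r.Y m)) (r.η (s.X m)) = V.vB.add (w m) (V.vA.zero (s.X m)) ∧
    V.vB.sub (s.ξ (r.Y m)) (r.η (s.X m)) = V.vA.add (w m) (V.vB.zero (r.Y m))

/-- The warp of the grid taken in the opposite order `((η, Y), (ξ, X))`:
`η(X(m)) -_B ξ(Y(m)) = w'(m) +_A 0̃_{Y(m)}`, etc. -/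
def DVB.IsWarpSwapped {D A B M : Type*} (V : DVB D A B M)
    (s : LinSecB V) (r : LinSecA V) (w' : M → D) : Prop :=
  ∀ m : M, V.CoreAt m (w' m) ∧
    V.vB.sub (r.η (s.X m)) (s.ξ (r.Y m)) = V.vA.add (w' m) (V.vB.zero (r.Y m)) ∧
    V.vA.sub (r.η (s.X m)) (s.ξ (r.Y m)) = V.vB.add (w' m) (V.vA.zero (s.X m))

namespace PreVB

variable {E B : Type*} (V : PreVB E B)

theorem zero_smul' (e : E) : V.smul 0 e = V.zero (V.π e) := by
  have hx : V.smul 0 e = V.add (V.smul 0 e) (V.smul 0 e) := by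
    have h := V.add_smul 0 0 e
    simpa using h
  have hπ : V.π (V.smul 0 e) = V.π e := V.π_smul 0 e
  set x := V.smul 0 e with hxdef
  calc x = V.add x (V.zero (V.π x)) := (V.add_zero x).symm
    _ = V.add x (V.add x (V.neg x)) := by rw [V.add_neg]
    _ = V.add (V.add x x) (V.neg x) :=
        (V.add_assoc x x (V.neg x) rfl (V.π_neg x).symm).symm
    _ = V.add x (V.neg x) := by rw [← hx]
    _ = V.zero (V.π x) := V.add_neg x
    _ = V.zero (V.π e) := by rw [hπ]

theorem neg_eq_smul (e : E) : V.neg e = V.smul (-1) e := by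
  have hπf : V.π (V.smul (-1) e) = V.π e := V.π_smul _ e
  have hef : V.add e (V.smul (-1) e) = V.zero (V.π e) := by
    have h1 : V.add e (V.smul (-1) e) = V.smul (1 + -1) e := by
      rw [V.add_smul, V.one_smul]
    have h2 : (1 : ℝ) + -1 = 0 := by norm_num
    rw [h1, h2, V.zero_smul']
  calc V.neg e
      = V.add (V.zero (V.π e)) (V.neg e) := by
        have := V.zero_add (V.neg e)
        rw [V.π_neg] at this
        exact this.symm
    _ = V.add (V.add e (V.smul (-1) e)) (V.neg e) := by rw [hef]
    _ = V.add e (V.add (V.smul (-1) e) (V.neg e)) :=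
        V.add_assoc e (V.smul (-1) e) (V.neg e) hπf.symm (hπf.trans (V.π_neg e).symm)
    _ = V.add e (V.add (V.neg e) (V.smul (-1) e)) := by
        rw [V.add_comm (V.smul (-1) e) (V.neg e) (hπf.trans (V.π_neg e).symm)]
    _ = V.add (V.add e (V.neg e)) (V.smul (-1) e) :=
        (V.add_assoc e (V.neg e) (V.smul (-1) e) (V.π_neg e).symm ((V.π_neg e).trans hπf.symm)).symm
    _ = V.add (V.zero (V.π e)) (V.smul (-1) e) := by rw [V.add_neg]
    _ = V.smul (-1) e := by
        have := V.zero_add (V.smul (-1) e)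
        rw [hπf] at this
        exact this

theorem neg_zero' (b : B) : V.neg (V.zero b) = V.zero b := by
  rw [V.neg_eq_smul, V.smul_zero]

theorem neg_neg' (e : E) : V.neg (V.neg e) = e := by
  rw [V.neg_eq_smul, V.neg_eq_smul, ← V.mul_smul]
  norm_num
  exact V.one_smul e

theorem neg_add' (e e' : E) (h : V.π e = V.π e') :
    V.neg (V.add e e') = V.add (V.neg e) (V.neg e') := by
  rw [V.neg_eq_smul, V.smul_add _ _ _ h, ← V.neg_eq_smul, ← V.neg_eq_smul]

/-- If `d = e + z` (in a common fibre) then `d - e = z`. -/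
theorem sub_of_add (d e z : E) (h : V.π e = V.π z) (hd : d = V.add e z) :
    V.sub d e = z := by
  subst hd
  unfold PreVB.sub
  calc V.add (V.add e z) (V.neg e)
      = V.add (V.add z e) (V.neg e) := by rw [V.add_comm e z h]
    _ = V.add z (V.add e (V.neg e)) := V.add_assoc z e (V.neg e) h.symm (V.π_neg e).symm
    _ = V.add z (V.zero (V.π e)) := by rw [V.add_neg]
    _ = V.add z (V.zero (V.π z)) := by rw [h]
    _ = z := V.add_zero z

/-- If `d - e = z` (with `d, e` in a common fibre) then `d = e + z`. -/
theorem add_of_sub (d e z : E) (h : V.π d = V.π e) (hz : V.sub d e = z) :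
    d = V.add e z := by
  subst hz
  unfold PreVB.sub
  calc d = V.add (V.zero (V.π d)) d := (V.zero_add d).symm
    _ = V.add (V.zero (V.π e)) d := by rw [h]
    _ = V.add (V.add e (V.neg e)) d := by rw [V.add_neg]
    _ = V.add e (V.add (V.neg e) d) :=
        V.add_assoc e (V.neg e) d (V.π_neg e).symm ((V.π_neg e).trans h.symm)
    _ = V.add e (V.add d (V.neg e)) := by
        rw [V.add_comm (V.neg e) d ((V.π_neg e).trans h.symm)]

theorem neg_sub' (d e : E) (h : V.π d = V.π e) :
    V.neg (V.sub d e) = V.sub e d := by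
  unfold PreVB.sub
  rw [V.neg_add' d (V.neg e) (h.trans (V.π_neg e).symm), V.neg_neg',
    V.add_comm (V.neg d) e ((V.π_neg d).trans h)]

end PreVB
namespace DVB

variable {D A B M : Type*} (V : DVB D A B M)

/-- Pointwise unique existence of the core element `c` with
`d -_A e = c +_B 0̃_a`. -/
theorem core_unique (m : M) (a : A) (b : B) (d e : D)
    (ha : V.bA.π a = m) (hd : V.vA.π d = a) (he : V.vA.π e = a)
    (hdb : V.vB.π d = b) (heb : V.vB.π e = b) :
    ∃! c : D, V.CoreAt m c ∧ V.vA.sub d e = V.vB.add c (V.vA.zero a) := by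
  have hde : V.vA.π d = V.vA.π e := hd.trans he.symm
  have hdeb : V.vB.π d = V.vB.π e := hdb.trans heb.symm
  have hbase : V.bA.π (V.vA.π d) = m := by rw [hd, ha]
  -- key fibre computations
  have hπz : ∀ c : D, V.CoreAt m c → V.vA.π (V.vB.add c (V.vA.zero a)) = a := by
    intro c hc
    obtain ⟨hc1, hc2⟩ := hc
    have hcc : V.vB.π c = V.vB.π (V.vA.zero a) := by
      rw [hc2, V.πB_zeroA, ha]
    rw [V.πA_addB c (V.vA.zero a) hcc, hc1, V.vA.π_zero]
    have := V.bA.zero_add a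
    rw [ha] at this
    exact this
  have hiff : ∀ c : D, V.CoreAt m c →
      ((V.vA.sub d e = V.vB.add c (V.vA.zero a)) ↔
        d = V.vA.add e (V.vB.add c (V.vA.zero (V.vA.π d)))) := by
    intro c hc
    rw [hd]
    constructor
    · intro h
      exact V.vA.add_of_sub d e _ hde h
    · intro h
      exact V.vA.sub_of_add d e _ (by rw [he, hπz c hc]) h
  obtain ⟨c, ⟨⟨hc1, hc2⟩, hceq⟩, hcu⟩ := V.core_exists d e hde hdeb
  rw [hbase] at hc1 hc2
  refine ⟨c, ⟨⟨hc1, hc2⟩, (hiff c ⟨hc1, hc2⟩).2 hceq⟩, ?_⟩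
  intro c' ⟨hc', heq'⟩
  apply hcu
  obtain ⟨hc'1, hc'2⟩ := hc'
  refine ⟨⟨by rw [hbase, hc'1], by rw [hbase, hc'2]⟩, ?_⟩
  exact (hiff c' ⟨hc'1, hc'2⟩).1 heq'

/-- The A-warp equation implies the B-warp equation. -/
theorem eqA_to_eqB (m : M) (a : A) (b : B) (d e c : D)
    (ha : V.bA.π a = m) (hb : V.bB.π b = m)
    (hd : V.vA.π d = a) (he : V.vA.π e = a)
    (_hdb : V.vB.π d = b) (heb : V.vB.π e = b)
    (hc : V.CoreAt m c)
    (h : V.vA.sub d e = V.vB.add c (V.vA.zero a)) :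
    V.vB.sub d e = V.vA.add c (V.vB.zero b) := by
  obtain ⟨hc1, hc2⟩ := hc
  have hde : V.vA.π d = V.vA.π e := hd.trans he.symm
  -- d = e +_A (c +_B 0̃_a)
  have hd1 : d = V.vA.add e (V.vB.add c (V.vA.zero a)) :=
    V.vA.add_of_sub d e _ hde h
  -- rewrite using interchange: d = (c +_A 0̃_b) +_B e
  have hkey : d = V.vB.add (V.vA.add c (V.vB.zero b)) e := by
    have hπAc : V.vA.π c = V.vA.π (V.vB.zero b) := by
      rw [hc1, V.πA_zeroB, hb]
    have hπA0e : V.vA.π (V.vA.zero a) = V.vA.π e := by rw [V.vA.π_zero, he]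
    have hπBc : V.vB.π c = V.vB.π (V.vA.zero a) := by
      rw [hc2, V.πB_zeroA, ha]
    have hπB0e : V.vB.π (V.vB.zero b) = V.vB.π e := by rw [V.vB.π_zero, heb]
    have hint := V.interchange c (V.vB.zero b) (V.vA.zero a) e hπAc hπA0e hπBc hπB0e
    have h0e : V.vA.add (V.vA.zero a) e = e := by
      have := V.vA.zero_add e
      rw [he] at this
      exact this
    have h0e' : V.vB.add (V.vB.zero b) e = e := by
      have := V.vB.zero_add e
      rw [heb] at this
      exact this
    rw [h0e, h0e'] at hint
    -- hint : vB.add (vA.add c 0̃B) e = vA.add (vB.add c 0̃A) e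
    rw [hint]
    calc d = V.vA.add e (V.vB.add c (V.vA.zero a)) := hd1
      _ = V.vA.add (V.vB.add c (V.vA.zero a)) e := by
          apply V.vA.add_comm
          rw [he]
          have hcc : V.vB.π c = V.vB.π (V.vA.zero a) := hπBc
          rw [V.πA_addB c (V.vA.zero a) hcc, hc1, V.vA.π_zero]
          have := V.bA.zero_add a
          rw [ha] at this
          exact this.symm
  -- conclude with sub_of_add in the B-structure
  apply V.vB.sub_of_add d e _ (by
    rw [heb, V.πB_addA c (V.vB.zero b) (by rw [hc1, V.πA_zeroB, hb]),
      hc2, V.vB.π_zero]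
    have := V.bB.zero_add b
    rw [hb] at this
    exact this.symm)
  calc d = V.vB.add (V.vA.add c (V.vB.zero b)) e := hkey
    _ = V.vB.add e (V.vA.add c (V.vB.zero b)) := by
        apply V.vB.add_comm
        rw [V.πB_addA c (V.vB.zero b) (by rw [hc1, V.πA_zeroB, hb]),
          hc2, V.vB.π_zero]
        have := V.bB.zero_add b
        rw [hb] at this
        rw [this, heb]

/-- Negation of a core element: `e -_A d = (-_A c) +_B 0̃_a` from
`d -_A e = c +_B 0̃_a`. -/
theorem negA_eq (m : M) (a : A) (d e c : D)
    (ha : V.bA.π a = m)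
    (hd : V.vA.π d = a) (he : V.vA.π e = a)
    (_hdeb : V.vB.π d = V.vB.π e)
    (hc : V.CoreAt m c)
    (h : V.vA.sub d e = V.vB.add c (V.vA.zero a)) :
    V.vA.sub e d = V.vB.add (V.vA.neg c) (V.vA.zero a) := by
  obtain ⟨hc1, hc2⟩ := hc
  have hde : V.vA.π d = V.vA.π e := hd.trans he.symm
  have h1 : V.vA.sub e d = V.vA.neg (V.vA.sub d e) := (V.vA.neg_sub' d e hde).symm
  rw [h1, h, V.vA.neg_eq_smul,
    V.smulA_addB (-1) c (V.vA.zero a) (by rw [hc2, V.πB_zeroA, ha]),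
    V.vA.smul_zero, ← V.vA.neg_eq_smul]

/-- A core element negated (w.r.t. the A-structure) is still a core element. -/
theorem coreAt_negA (m : M) (c : D) (hc : V.CoreAt m c) :
    V.CoreAt m (V.vA.neg c) := by
  obtain ⟨hc1, hc2⟩ := hc
  exact ⟨by rw [V.vA.π_neg, hc1], by rw [V.πB_negA, hc2, V.bB.neg_zero']⟩

end DVB
/-- A grid `((ξ, X), (η, Y))` on a double vector bundle has a
unique warp: a section of the core bundle `C → M` (a core-valued map on `M`)
satisfying the warp equations; and interchanging `ξ` and `η` changes its
sign. -/
theorem dvb_warp_exists_unique_and_antisymm {D A B M : Type*} (V : DVB D A B M)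
    (s : LinSecB V) (r : LinSecA V) :
    (∃! w : M → D, V.IsWarp s r w) ∧
      (∀ w w' : M → D, V.IsWarp s r w → V.IsWarpSwapped s r w' →
        ∀ m, w' m = V.vA.neg (w m)) := by
  -- basic fibre data at each point
  have ha : ∀ m, V.bA.π (s.X m) = m := s.secX
  have hb : ∀ m, V.bB.π (r.Y m) = m := r.secY
  have hd : ∀ m, V.vA.π (s.ξ (r.Y m)) = s.X m := by
    intro m; rw [s.over_base, hb]
  have he : ∀ m, V.vA.π (r.η (s.X m)) = s.X m := fun m => r.proj _
  have hdb : ∀ m, V.vB.π (s.ξ (r.Y m)) = r.Y m := fun m => s.proj _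
  have heb : ∀ m, V.vB.π (r.η (s.X m)) = r.Y m := by
    intro m; rw [r.over_base, ha]
  -- pointwise unique existence of the warp element
  have pointwise : ∀ m, ∃! c : D, V.CoreAt m c ∧
      V.vA.sub (s.ξ (r.Y m)) (r.η (s.X m)) = V.vB.add c (V.vA.zero (s.X m)) :=
    fun m => V.core_unique m (s.X m) (r.Y m) _ _ (ha m) (hd m) (he m) (hdb m) (heb m)
  -- the same with the two sections swapped
  have pointwise' : ∀ m, ∃! c : D, V.CoreAt m c ∧
      V.vA.sub (r.η (s.X m)) (s.ξ (r.Y m)) = V.vB.add c (V.vA.zero (s.X m)) :=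
    fun m => V.core_unique m (s.X m) (r.Y m) _ _ (ha m) (he m) (hd m) (heb m) (hdb m)
  constructor
  · -- existence and uniqueness of the warp
    refine ⟨fun m => (pointwise m).choose, ?_, ?_⟩
    · intro m
      obtain ⟨hcore, heqA⟩ := (pointwise m).choose_spec.1
      exact ⟨hcore, heqA,
        V.eqA_to_eqB m (s.X m) (r.Y m) _ _ _ (ha m) (hb m) (hd m) (he m)
          (hdb m) (heb m) hcore heqA⟩
    · intro w hw
      funext m
      obtain ⟨hcore, heqA, _⟩ := hw m
      exact ((pointwise m).choose_spec.2 (w m) ⟨hcore, heqA⟩)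
  · -- antisymmetry
    intro w w' hw hw' m
    obtain ⟨hcore, heqA, _⟩ := hw m
    obtain ⟨hcore', _, heqA'⟩ := hw' m
    have hneg : V.vA.sub (r.η (s.X m)) (s.ξ (r.Y m)) =
        V.vB.add (V.vA.neg (w m)) (V.vA.zero (s.X m)) :=
      V.negA_eq m (s.X m) _ _ _ (ha m) (hd m) (he m)
        ((hdb m).trans (heb m).symm) hcore heqA
    exact ExistsUnique.unique (pointwise' m) ⟨hcore', heqA'⟩
      ⟨V.coreAt_negA m (w m) hcore, hneg⟩
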